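/- For θ ∈ ℝ define f_θ : ℝ → (0,∞) by f_θ(t) = exp((1/θ) log(1+e^{θt}) + log(1+e^{-t})) for θ ≠ 0 and f₀(t) = exp(t/2 + log(1+e^{-t})). Then: if θ > -1, f_θ is decreasing on (-∞,0) and increasing on (0,∞); if θ < -1, f_θ is increasing on (-∞,0) and decreasing on (0,∞); and f_{-1} is constant equal to 1. -/

import Mathlib

noncomputable def fTheta (θ t : ℝ) : ℝ :=
  if θ = 0 then Real.exp (t / 2 + Real.log (1 + Real.exp (-t)))
  else Real.exp ((1 / θ) * Real.log (1 + Real.exp (θ * t)) + Real.log (1 + Real.exp (-t)))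

noncomputable def hfun (θ t : ℝ) : ℝ :=
  if θ = 0 then t / 2 + Real.log (1 + Real.exp (-t))
  else (1 / θ) * Real.log (1 + Real.exp (θ * t)) + Real.log (1 + Real.exp (-t))

lemma fTheta_eq (θ t : ℝ) : fTheta θ t = Real.exp (hfun θ t) := by
  unfold fTheta hfun; split_ifs <;> rfl

lemma one_add_exp_pos (x : ℝ) : (0:ℝ) < 1 + Real.exp x := by positivity

lemma hfun_hasDeriv (θ t : ℝ) :
    HasDerivAt (hfun θ)
      (Real.exp (θ * t) / (1 + Real.exp (θ * t)) - Real.exp (-t) / (1 + Real.exp (-t))) t := by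
  have h2 : HasDerivAt (fun t : ℝ => Real.log (1 + Real.exp (-t)))
      (-Real.exp (-t) / (1 + Real.exp (-t))) t := by
    have : HasDerivAt (fun t : ℝ => 1 + Real.exp (-t)) (-Real.exp (-t)) t := by
      have h := (Real.hasDerivAt_exp (-t)).comp t (hasDerivAt_neg t)
      simpa using h.const_add 1
    have := this.log (ne_of_gt (one_add_exp_pos (-t)))
    simpa using this
  by_cases hθ : θ = 0
  · subst hθ
    have h1 : HasDerivAt (fun t : ℝ => t / 2) (1/2 : ℝ) t := by
      simpa using (hasDerivAt_id t).div_const 2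
    have key := h1.add h2
    have : hfun 0 = fun t : ℝ => t / 2 + Real.log (1 + Real.exp (-t)) := by
      funext t; simp [hfun]
    rw [this]
    convert key using 1
    rfl; rfl; rfl
    rw [zero_mul, Real.exp_zero]
    norm_num
    ring
  · have h1 : HasDerivAt (fun t : ℝ => (1/θ) * Real.log (1 + Real.exp (θ * t)))
        (Real.exp (θ * t) / (1 + Real.exp (θ * t))) t := by
      have hlin : HasDerivAt (fun t : ℝ => θ * t) θ t := by
        simpa using (hasDerivAt_id t).const_mul θ
      have hexp := (Real.hasDerivAt_exp (θ * t)).comp t hlin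
      have hadd : HasDerivAt (fun t : ℝ => 1 + Real.exp (θ * t)) (Real.exp (θ * t) * θ) t := by
        simpa using hexp.const_add 1
      have hlog := hadd.log (ne_of_gt (one_add_exp_pos (θ * t)))
      have := hlog.const_mul (1/θ)
      convert this using 1
      rfl; rfl
      field_simp
    have key := h1.add h2
    have : hfun θ = fun t : ℝ => (1/θ) * Real.log (1 + Real.exp (θ * t)) + Real.log (1 + Real.exp (-t)) := by
      funext t; simp [hfun, hθ]
    rw [this]
    convert key using 1
    rfl; rfl; rfl
    ring

lemma deriv_sign (θ t : ℝ) :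
    Real.exp (θ * t) / (1 + Real.exp (θ * t)) - Real.exp (-t) / (1 + Real.exp (-t))
      = (Real.exp (θ * t) - Real.exp (-t)) / ((1 + Real.exp (θ * t)) * (1 + Real.exp (-t))) := by
  have h1 := (one_add_exp_pos (θ * t)).ne'
  have h2 := (one_add_exp_pos (-t)).ne'
  field_simp
  ring

lemma hfun_cont (θ : ℝ) : Continuous (hfun θ) :=
  (fun t => (hfun_hasDeriv θ t).differentiableAt) |> Differentiable.continuous

lemma hfun_deriv (θ t : ℝ) :
    deriv (hfun θ) t =
      Real.exp (θ * t) / (1 + Real.exp (θ * t)) - Real.exp (-t) / (1 + Real.exp (-t)) :=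
  (hfun_hasDeriv θ t).deriv

theorem stmt_12 :
    (∀ θ : ℝ, -1 < θ →
      StrictAntiOn (fTheta θ) (Set.Iio (0:ℝ)) ∧ StrictMonoOn (fTheta θ) (Set.Ioi (0:ℝ))) ∧
    (∀ θ : ℝ, θ < -1 →
      StrictMonoOn (fTheta θ) (Set.Iio (0:ℝ)) ∧ StrictAntiOn (fTheta θ) (Set.Ioi (0:ℝ))) ∧
    (∀ t : ℝ, fTheta (-1) t = 1) := by
  have dpos : ∀ θ t : ℝ, -t < θ * t → 0 < deriv (hfun θ) t := by
    intro θ t h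
    rw [hfun_deriv, deriv_sign]
    apply div_pos
    · simpa [sub_pos] using Real.exp_lt_exp.2 h
    · exact mul_pos (one_add_exp_pos _) (one_add_exp_pos _)
  have dneg : ∀ θ t : ℝ, θ * t < -t → deriv (hfun θ) t < 0 := by
    intro θ t h
    rw [hfun_deriv, deriv_sign]
    apply div_neg_of_neg_of_pos
    · simpa [sub_neg] using Real.exp_lt_exp.2 h
    · exact mul_pos (one_add_exp_pos _) (one_add_exp_pos _)
  have expmono : ∀ θ : ℝ, ∀ s : Set ℝ, StrictMonoOn (hfun θ) s → StrictMonoOn (fTheta θ) s := by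
    intro θ s hm a ha b hb hab
    rw [fTheta_eq, fTheta_eq]
    exact Real.exp_lt_exp.2 (hm ha hb hab)
  have expanti : ∀ θ : ℝ, ∀ s : Set ℝ, StrictAntiOn (hfun θ) s → StrictAntiOn (fTheta θ) s := by
    intro θ s hm a ha b hb hab
    rw [fTheta_eq, fTheta_eq]
    exact Real.exp_lt_exp.2 (hm ha hb hab)
  refine ⟨fun θ hθ => ⟨?_, ?_⟩, fun θ hθ => ⟨?_, ?_⟩, fun t => ?_⟩
  · apply expanti
    apply strictAntiOn_of_deriv_neg (convex_Iio 0) (hfun_cont θ).continuousOn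
    intro t ht
    rw [interior_Iio] at ht
    apply dneg
    nlinarith [ht.out]
  · apply expmono
    apply strictMonoOn_of_deriv_pos (convex_Ioi 0) (hfun_cont θ).continuousOn
    intro t ht
    rw [interior_Ioi] at ht
    apply dpos
    nlinarith [ht.out]
  · apply expmono
    apply strictMonoOn_of_deriv_pos (convex_Iio 0) (hfun_cont θ).continuousOn
    intro t ht
    rw [interior_Iio] at ht
    apply dpos
    nlinarith [ht.out]
  · apply expanti
    apply strictAntiOn_of_deriv_neg (convex_Ioi 0) (hfun_cont θ).continuousOn
    intro t ht
    rw [interior_Ioi] at ht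
    apply dneg
    nlinarith [ht.out]
  · have : fTheta (-1) t = Real.exp ((1 / (-1:ℝ)) * Real.log (1 + Real.exp ((-1) * t)) + Real.log (1 + Real.exp (-t))) := by
      rw [fTheta, if_neg (by norm_num)]
    rw [this]
    norm_num
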